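/- arXiv:2411.08273 — 4 statements merged into one kernel-verified Lean document; each statement's English description precedes it below -/
import Mathlib

section
/- Let σ > 0, r > 0, and b ≥ 1. Suppose X, Y, Z : ℝ → ℝ are differentiable and satisfy the Lorenz system X' = −σX + σY, Y' = −σX − Y − XZ, Z' = −bZ + XY − b(r+σ), and suppose y, z : ℝ → ℝ are differentiable and satisfy the X-observed synchronization system y' = −σX − y − Xz, z' = −bz + Xy − b(r+σ) (with the same function X). Then for all t ≥ 0: (Y(t) − y(t))² + (Z(t) − z(t))² ≤ ((Y(0) − y(0))² + (Z(0) − z(0))²) · e^{−2t}. -/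
/-- For the Lorenz 1963 system (shifted form) with `σ > 0`, `r > 0`,
`b ≥ 1`, the X-observed synchronization system `y' = -σX - y - Xz`,
`z' = -bz + Xy - b(r+σ)` satisfies, for all `t ≥ 0`,
`(Y-y)² + (Z-z)² ≤ ((Y₀-y₀)² + (Z₀-z₀)²) e^{-2t}`. -/
theorem lorenz_X_observed_synchronization
    (σ r b : ℝ) (hσ : 0 < σ) (hr : 0 < r) (hb : 1 ≤ b)
    (X Y Z y z : ℝ → ℝ)
    (hX : ∀ t, HasDerivAt X (-σ * X t + σ * Y t) t)
    (hY : ∀ t, HasDerivAt Y (-σ * X t - Y t - X t * Z t) t)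
    (hZ : ∀ t, HasDerivAt Z (-b * Z t + X t * Y t - b * (r + σ)) t)
    (hy : ∀ t, HasDerivAt y (-σ * X t - y t - X t * z t) t)
    (hz : ∀ t, HasDerivAt z (-b * z t + X t * y t - b * (r + σ)) t) :
    ∀ t ≥ (0 : ℝ), (Y t - y t) ^ 2 + (Z t - z t) ^ 2 ≤
      ((Y 0 - y 0) ^ 2 + (Z 0 - z 0) ^ 2) * Real.exp (-2 * t) := by
  set g : ℝ → ℝ := fun t => ((Y t - y t) ^ 2 + (Z t - z t) ^ 2) * Real.exp (2 * t) with hg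
  have hderiv : ∀ t, HasDerivAt g
      ((2 * (Y t - y t) * (-(Y t - y t) - X t * (Z t - z t))
        + 2 * (Z t - z t) * (-b * (Z t - z t) + X t * (Y t - y t))
        + 2 * ((Y t - y t) ^ 2 + (Z t - z t) ^ 2)) * Real.exp (2 * t)) t := by
    intro t
    have hu : HasDerivAt (fun t => Y t - y t) (-(Y t - y t) - X t * (Z t - z t)) t := by
      have := (hY t).sub (hy t); exact this.congr_deriv (by ring)
    have hv : HasDerivAt (fun t => Z t - z t) (-b * (Z t - z t) + X t * (Y t - y t)) t := by
      have := (hZ t).sub (hz t); exact this.congr_deriv (by ring)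
    have hE : HasDerivAt (fun t => (Y t - y t) ^ 2 + (Z t - z t) ^ 2)
        (2 * (Y t - y t) * (-(Y t - y t) - X t * (Z t - z t))
          + 2 * (Z t - z t) * (-b * (Z t - z t) + X t * (Y t - y t))) t := by
      have h1 := (hu.pow 2).add (hv.pow 2)
      exact h1.congr_deriv (by ring)
    have hexp : HasDerivAt (fun t => Real.exp (2 * t)) (2 * Real.exp (2 * t)) t := by
      have := (Real.hasDerivAt_exp (2 * t)).comp t ((hasDerivAt_id t).const_mul 2)
      exact this.congr_deriv (by ring)
    have := hE.mul hexp
    exact this.congr_deriv (by ring)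
  have hdnonpos : ∀ t, deriv g t ≤ 0 := by
    intro t
    rw [(hderiv t).deriv]
    have key : 2 * (Y t - y t) * (-(Y t - y t) - X t * (Z t - z t))
        + 2 * (Z t - z t) * (-b * (Z t - z t) + X t * (Y t - y t))
        + 2 * ((Y t - y t) ^ 2 + (Z t - z t) ^ 2)
        = 2 * (1 - b) * (Z t - z t) ^ 2 := by ring
    rw [key]
    apply mul_nonpos_of_nonpos_of_nonneg
    · have := sq_nonneg (Z t - z t)
      nlinarith
    · exact (Real.exp_pos _).le
  have hanti : Antitone g :=
    antitone_of_deriv_nonpos (fun t => (hderiv t).differentiableAt) hdnonpos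
  intro t ht
  have := hanti ht
  simp only [hg] at this
  rw [mul_zero, Real.exp_zero, mul_one] at this
  have hpos : (0:ℝ) < Real.exp (2 * t) := Real.exp_pos _
  have h2 : Real.exp (-2 * t) = (Real.exp (2 * t))⁻¹ := by
    rw [← Real.exp_neg]; ring_nf
  rw [h2, ← div_eq_mul_inv, le_div_iff₀ hpos]
  exact this
end

section
/- Let b > 0 and let e_Y, e_Z, X : ℝ → ℝ be differentiable functions satisfying the error equations e_Y' = −e_Y − X·e_Z and e_Z' = −b·e_Z + X·e_Y. Then the energy identity d/dt (e_Y² + e_Z²) = −2e_Y² − 2b·e_Z² holds at every time, and consequently for all t ≥ 0: e_Y(t)² + e_Z(t)² ≤ (e_Y(0)² + e_Z(0)²) · e^{−2·min(1,b)·t}. -/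
/-- For `b > 0`, the error equations `e_Y' = -e_Y - X e_Z`,
`e_Z' = -b e_Z + X e_Y` satisfy the energy identity
`d/dt (e_Y² + e_Z²) = -2 e_Y² - 2 b e_Z²` at every time, and consequently for all
`t ≥ 0`, `e_Y(t)² + e_Z(t)² ≤ (e_Y(0)² + e_Z(0)²) e^{-2 min(1,b) t}`. -/
theorem lorenz_error_energy_decay
    (b : ℝ) (hb : 0 < b) (eY eZ X : ℝ → ℝ)
    (hY : ∀ t, HasDerivAt eY (-eY t - X t * eZ t) t)
    (hZ : ∀ t, HasDerivAt eZ (-b * eZ t + X t * eY t) t) :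
    (∀ t : ℝ, HasDerivAt (fun s => eY s ^ 2 + eZ s ^ 2)
        (-2 * eY t ^ 2 - 2 * b * eZ t ^ 2) t) ∧
      ∀ t ≥ (0 : ℝ), eY t ^ 2 + eZ t ^ 2 ≤
        (eY 0 ^ 2 + eZ 0 ^ 2) * Real.exp (-2 * min 1 b * t) := by
  have hV : ∀ t : ℝ, HasDerivAt (fun s => eY s ^ 2 + eZ s ^ 2)
      (-2 * eY t ^ 2 - 2 * b * eZ t ^ 2) t := by
    intro t
    have h1 := ((hY t).fun_pow 2).fun_add ((hZ t).fun_pow 2)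
    refine h1.congr_deriv ?_
    ring
  refine ⟨hV, ?_⟩
  intro t ht
  set m := min 1 b with hm
  have hm0 : 0 < m := lt_min one_pos hb
  -- g s = V s * exp(2 m s) is antitone
  set g : ℝ → ℝ := fun s => (eY s ^ 2 + eZ s ^ 2) * Real.exp (2 * m * s) with hg
  have hg' : ∀ s : ℝ, HasDerivAt g
      ((-2 * eY s ^ 2 - 2 * b * eZ s ^ 2) * Real.exp (2 * m * s)
        + (eY s ^ 2 + eZ s ^ 2) * (Real.exp (2 * m * s) * (2 * m))) s := by
    intro s
    have hexp : HasDerivAt (fun y : ℝ => Real.exp (2 * m * y))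
        (Real.exp (2 * m * s) * (2 * m)) s := by
      simpa using (((hasDerivAt_id s).const_mul (2 * m)).exp)
    exact (hV s).mul hexp
  have hgle : ∀ s : ℝ, (-2 * eY s ^ 2 - 2 * b * eZ s ^ 2) * Real.exp (2 * m * s)
        + (eY s ^ 2 + eZ s ^ 2) * (Real.exp (2 * m * s) * (2 * m)) ≤ 0 := by
    intro s
    have he : 0 < Real.exp (2 * m * s) := Real.exp_pos _
    have h1 : m ≤ 1 := min_le_left _ _
    have h2 : m ≤ b := min_le_right _ _
    have hfac : (-2 * eY s ^ 2 - 2 * b * eZ s ^ 2) * Real.exp (2 * m * s)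
        + (eY s ^ 2 + eZ s ^ 2) * (Real.exp (2 * m * s) * (2 * m))
        = ((-2 * eY s ^ 2 - 2 * b * eZ s ^ 2) + (eY s ^ 2 + eZ s ^ 2) * (2 * m))
          * Real.exp (2 * m * s) := by ring
    rw [hfac]
    apply mul_nonpos_of_nonpos_of_nonneg _ he.le
    nlinarith [sq_nonneg (eY s), sq_nonneg (eZ s)]
  have hanti : AntitoneOn g (Set.Icc 0 t) := by
    apply antitoneOn_of_deriv_nonpos (convex_Icc 0 t)
    · have : Continuous g := by
        have hcY : Continuous eY := by
          rw [continuous_iff_continuousAt]; exact fun s => (hY s).continuousAt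
        have hcZ : Continuous eZ := by
          rw [continuous_iff_continuousAt]; exact fun s => (hZ s).continuousAt
        exact ((hcY.pow 2).add (hcZ.pow 2)).mul
          (Real.continuous_exp.comp (by continuity))
      exact this.continuousOn
    · intro s hs
      exact (hg' s).differentiableAt.differentiableWithinAt
    · intro s hs
      rw [(hg' s).deriv]
      exact hgle s
  have hgt : g t ≤ g 0 := by
    rcases eq_or_lt_of_le ht with h0 | h0
    · simp [← h0]
    · exact hanti (Set.left_mem_Icc.mpr ht) (Set.right_mem_Icc.mpr ht) ht
  have he : 0 < Real.exp (2 * m * t) := Real.exp_pos _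
  have : (eY t ^ 2 + eZ t ^ 2) * Real.exp (2 * m * t) ≤ (eY 0 ^ 2 + eZ 0 ^ 2) := by
    simpa [g, mul_comm] using hgt
  have key : eY t ^ 2 + eZ t ^ 2 ≤ (eY 0 ^ 2 + eZ 0 ^ 2) / Real.exp (2 * m * t) :=
    (le_div_iff₀ he).mpr this
  calc eY t ^ 2 + eZ t ^ 2 ≤ (eY 0 ^ 2 + eZ 0 ^ 2) / Real.exp (2 * m * t) := key
    _ = (eY 0 ^ 2 + eZ 0 ^ 2) * Real.exp (-2 * m * t) := by
        rw [div_eq_mul_inv, ← Real.exp_neg]; ring_nf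
end

section
/- Let σ > 0, b > 0 with b ≠ σ, and J ≥ 0. Suppose X, Y, Z : ℝ → ℝ are differentiable and satisfy the Lorenz system X' = −σX + σY, Y' = −σX − Y − XZ, Z' = −bZ + XY − b(r+σ) for some r ∈ ℝ, suppose |Y(t)| ≤ √J for all t ≥ 0, and suppose x, z : ℝ → ℝ are differentiable and satisfy the Y-observed synchronization system x' = −σx + σY, z' = −bz + xY − b(r+σ). Then for all t ≥ 0: |Z(t) − z(t)| ≤ |Z(0) − z(0)|·e^{−bt} + √J·|X(0) − x(0)|·(e^{−σt} − e^{−bt})/(b − σ). -/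
/-- exact solution of linear decay ODE -/
lemma decay_sol (σ : ℝ) (u : ℝ → ℝ) (hu : ∀ t, HasDerivAt u (-σ * u t) t) :
    ∀ t, u t = u 0 * Real.exp (-σ * t) := by
  intro t
  have key : ∀ s, HasDerivAt (fun s => u s * Real.exp (σ * s)) 0 s := by
    intro s
    have h1 := (hu s).mul ((Real.hasDerivAt_exp (σ*s)).comp s ((hasDerivAt_id s).const_mul σ))
    refine h1.congr_deriv ?_
    simp [Function.comp]
    ring
  have hconst : (fun s => u s * Real.exp (σ * s)) t = (fun s => u s * Real.exp (σ * s)) 0 := by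
    have : ∀ s, deriv (fun s => u s * Real.exp (σ * s)) s = 0 := fun s => (key s).deriv
    exact is_const_of_deriv_eq_zero (fun s => (key s).differentiableAt) this t 0
  simp only at hconst
  have h2 : u t * Real.exp (σ * t) = u 0 := by simpa using hconst
  have h3 := congrArg (· * Real.exp (-σ * t)) h2
  rw [← h3, mul_assoc, ← Real.exp_add]
  ring_nf
  simp

lemma exp_integral (c : ℝ) (hc : c ≠ 0) (t : ℝ) :
    ∫ s in (0:ℝ)..t, Real.exp (c * s) = (Real.exp (c * t) - 1) / c := by
  have h : ∀ s, HasDerivAt (fun s => Real.exp (c * s) / c) (Real.exp (c * s)) s := by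
    intro s
    have h1 := ((Real.hasDerivAt_exp (c*s)).comp s ((hasDerivAt_id s).const_mul c)).div_const c
    refine h1.congr_deriv ?_
    field_simp
  rw [intervalIntegral.integral_eq_sub_of_hasDerivAt (fun s _ => h s)
    ((Real.continuous_exp.comp (continuous_const.mul continuous_id)).intervalIntegrable 0 t)]
  simp
  ring

/-- For the Lorenz 1963 system with `σ > 0`, `b > 0`, `b ≠ σ`, and
a uniform bound `|Y(t)| ≤ √J` (`J ≥ 0`) for `t ≥ 0`, the Y-observed
synchronization system `x' = -σx + σY`, `z' = -bz + xY - b(r+σ)` satisfies, for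
all `t ≥ 0`,
`|Z(t) - z(t)| ≤ |Z(0) - z(0)| e^{-bt} + √J |X(0) - x(0)| (e^{-σt} - e^{-bt})/(b - σ)`. -/
theorem lorenz_Y_observed_Z_error_bound
    (σ b J r : ℝ) (hσ : 0 < σ) (hb : 0 < b) (hbσ : b ≠ σ) (hJ : 0 ≤ J)
    (X Y Z x z : ℝ → ℝ)
    (hX : ∀ t, HasDerivAt X (-σ * X t + σ * Y t) t)
    (hY : ∀ t, HasDerivAt Y (-σ * X t - Y t - X t * Z t) t)
    (hZ : ∀ t, HasDerivAt Z (-b * Z t + X t * Y t - b * (r + σ)) t)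
    (hYbound : ∀ t ≥ (0 : ℝ), |Y t| ≤ Real.sqrt J)
    (hx : ∀ t, HasDerivAt x (-σ * x t + σ * Y t) t)
    (hz : ∀ t, HasDerivAt z (-b * z t + x t * Y t - b * (r + σ)) t) :
    ∀ t ≥ (0 : ℝ), |Z t - z t| ≤
      |Z 0 - z 0| * Real.exp (-b * t) +
        Real.sqrt J * |X 0 - x 0| *
          (Real.exp (-σ * t) - Real.exp (-b * t)) / (b - σ) := by
  intro t ht
  set c : ℝ := b - σ with hc
  have hcne : c ≠ 0 := sub_ne_zero.mpr hbσ
  set d : ℝ := X 0 - x 0 with hd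
  have hEx : ∀ s, X s - x s = d * Real.exp (-σ * s) := by
    apply decay_sol σ (fun s => X s - x s)
    intro s
    have := (hX s).sub (hx s)
    refine this.congr_deriv ?_
    ring
  have hYc : Continuous Y := by
    have : Differentiable ℝ Y := fun s => (hY s).differentiableAt
    exact this.continuous
  -- derivative of g
  have hg : ∀ s, HasDerivAt (fun s => (Z s - z s) * Real.exp (b * s))
      (Y s * d * Real.exp (c * s)) s := by
    intro s
    have h1 := ((hZ s).sub (hz s)).mul
      ((Real.hasDerivAt_exp (b*s)).comp s ((hasDerivAt_id s).const_mul b))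
    refine h1.congr_deriv ?_
    simp only [Function.comp, id_eq, Pi.sub_apply]
    have h2 : X s - x s = d * Real.exp (-σ * s) := hEx s
    have h3 : Real.exp (c * s) = Real.exp (-σ * s) * Real.exp (b * s) := by
      rw [← Real.exp_add, hc]; ring_nf
    rw [h3]
    linear_combination (Y s * Real.exp (b * s)) * h2
  -- FTC
  have hcont : Continuous fun s => Y s * d * Real.exp (c * s) :=
    (hYc.mul continuous_const).mul (Real.continuous_exp.comp (continuous_const.mul continuous_id))
  have hftc : (Z t - z t) * Real.exp (b * t) - (Z 0 - z 0) * 1 =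
      ∫ s in (0:ℝ)..t, Y s * d * Real.exp (c * s) := by
    have := intervalIntegral.integral_eq_sub_of_hasDerivAt (fun s _ => hg s)
      (hcont.intervalIntegrable 0 t)
    simpa using this.symm
  -- bound the integral
  have hbound : |∫ s in (0:ℝ)..t, Y s * d * Real.exp (c * s)| ≤
      Real.sqrt J * |d| * ((Real.exp (c * t) - 1) / c) := by
    have h1 : |∫ s in (0:ℝ)..t, Y s * d * Real.exp (c * s)| ≤
        ∫ s in (0:ℝ)..t, |Y s * d * Real.exp (c * s)| :=
      intervalIntegral.abs_integral_le_integral_abs ht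
    have h2 : (∫ s in (0:ℝ)..t, |Y s * d * Real.exp (c * s)|) ≤
        ∫ s in (0:ℝ)..t, Real.sqrt J * |d| * Real.exp (c * s) := by
      apply intervalIntegral.integral_mono_on ht
        (hcont.abs.intervalIntegrable 0 t)
        ((continuous_const.mul (Real.continuous_exp.comp
          (continuous_const.mul continuous_id))).intervalIntegrable 0 t)
      intro s hs
      rw [abs_mul, abs_mul, abs_of_pos (Real.exp_pos _)]
      exact mul_le_mul_of_nonneg_right
        (mul_le_mul_of_nonneg_right (hYbound s hs.1) (abs_nonneg _)) (Real.exp_pos _).le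
    refine h1.trans (h2.trans ?_)
    rw [intervalIntegral.integral_const_mul, exp_integral c hcne]
  -- conclude
  have he : Real.exp (b * t) * Real.exp (-b * t) = 1 := by
    rw [← Real.exp_add, show b*t + -b*t = 0 by ring, Real.exp_zero]
  have hgt : (Z t - z t) * Real.exp (b * t) =
      (Z 0 - z 0) + ∫ s in (0:ℝ)..t, Y s * d * Real.exp (c * s) := by linarith [hftc]
  have hEz : Z t - z t = ((Z 0 - z 0) + ∫ s in (0:ℝ)..t, Y s * d * Real.exp (c * s))
      * Real.exp (-b * t) := by
    rw [← hgt, mul_assoc, he, mul_one]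
  rw [hEz, abs_mul, abs_of_pos (Real.exp_pos _)]
  have key : |(Z 0 - z 0) + ∫ s in (0:ℝ)..t, Y s * d * Real.exp (c * s)| ≤
      |Z 0 - z 0| + Real.sqrt J * |d| * ((Real.exp (c * t) - 1) / c) :=
    (abs_add_le _ _).trans (by linarith)
  have hfinal := mul_le_mul_of_nonneg_right key (Real.exp_pos (-b*t)).le
  refine hfinal.trans_eq ?_
  have h3 : Real.exp (c * t) * Real.exp (-b * t) = Real.exp (-σ * t) := by
    rw [← Real.exp_add, show c*t + -b*t = -σ*t by rw [hc]; ring]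
  linear_combination (Real.sqrt J * |d| / c) * h3
end

section
/- Fix t ∈ ℝ, Z₀, z₀ ∈ ℝ with z₀ ≠ Z₀, and functions X, Y : ℝ → ℝ. Let Z : ℝ → ℝ satisfy Z' = XY with Z(0) = Z₀, and let z̃ : ℝ → ℝ satisfy z̃' = XY with z̃(0) = z₀ (the b = 0 synchronized system with X and Y observed). Suppose for each μ > 0 we are given functions x_μ, y_μ, z_μ : ℝ → ℝ such that z_μ(t) → z̃(t) as μ → ∞. Then liminf_{μ→∞} ‖(X(t) − x_μ(t), Y(t) − y_μ(t), Z(t) − z_μ(t))‖_{ℓ²} ≥ |z₀ − Z₀| > 0. -/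
open Filter

/-- Fix a time `t`, initial values `Z₀ ≠ z₀`, and let `Z`, `z̃`
solve `w' = XY` with `Z(0) = Z₀`, `z̃(0) = z₀` (the `b = 0` synchronization
system with `X` and `Y` observed).  If for each nudging parameter `μ` the nudged
solutions satisfy `z_μ(t) → z̃(t)` as `μ → ∞`, then
`liminf_{μ→∞} ‖(X(t)-x_μ(t), Y(t)-y_μ(t), Z(t)-z_μ(t))‖_{ℓ²} ≥ |z₀ - Z₀| > 0`,
stated here in the equivalent eventual form: for every `ε > 0`, eventually in
`μ` the ℓ² error is at least `|z₀ - Z₀| - ε`. -/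
theorem lorenz_nudged_error_liminf_lower_bound
    (t Z₀ z₀ : ℝ) (hne : z₀ ≠ Z₀) (X Y Z ztil : ℝ → ℝ)
    (hZ : ∀ s, HasDerivAt Z (X s * Y s) s) (hZ0 : Z 0 = Z₀)
    (hztil : ∀ s, HasDerivAt ztil (X s * Y s) s) (hztil0 : ztil 0 = z₀)
    (x y z : ℝ → ℝ → ℝ)
    (hconv : Tendsto (fun μ : ℝ => z μ t) atTop (nhds (ztil t))) :
    (∀ ε > (0 : ℝ), ∀ᶠ μ : ℝ in atTop,
        |z₀ - Z₀| - ε ≤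
          Real.sqrt ((X t - x μ t) ^ 2 + (Y t - y μ t) ^ 2 + (Z t - z μ t) ^ 2)) ∧
      0 < |z₀ - Z₀| := by
  have hdiff : ∀ s : ℝ, HasDerivAt (fun s => ztil s - Z s) 0 s := by
    intro s
    have := (hztil s).sub (hZ s)
    rw [sub_self] at this; exact this
  have hconst : ∀ s : ℝ, ztil s - Z s = z₀ - Z₀ := by
    intro s
    have h := is_const_of_deriv_eq_zero (f := fun s => ztil s - Z s)
      (fun s => (hdiff s).differentiableAt) (fun s => (hdiff s).deriv) s 0
    simpa [hZ0, hztil0] using h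
  refine ⟨?_, abs_pos.mpr (sub_ne_zero.mpr hne)⟩
  intro ε hε
  have hev : ∀ᶠ μ : ℝ in atTop, |z μ t - ztil t| < ε := by
    have := Metric.tendsto_nhds.mp hconv ε hε
    simpa [Real.dist_eq] using this
  filter_upwards [hev] with μ hμ
  have h1 : |z₀ - Z₀| - ε ≤ |Z t - z μ t| := by
    have hZt : Z t = ztil t - (z₀ - Z₀) := by
      have := hconst t; linarith
    have : |z₀ - Z₀| ≤ |Z t - z μ t| + |z μ t - ztil t| := by
      calc |z₀ - Z₀| = |(Z t - z μ t) + (z μ t - ztil t)| := by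
            rw [hZt]; ring_nf; rw [abs_sub_comm]; ring_nf
        _ ≤ _ := abs_add_le _ _
    linarith
  have h2 : |Z t - z μ t| ≤
      Real.sqrt ((X t - x μ t) ^ 2 + (Y t - y μ t) ^ 2 + (Z t - z μ t) ^ 2) := by
    rw [← Real.sqrt_sq_eq_abs]
    apply Real.sqrt_le_sqrt
    nlinarith [sq_nonneg (X t - x μ t), sq_nonneg (Y t - y μ t)]
  linarith
end
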